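/- For every n ≥ 1 there exists ℓ and distinct vertices x_1,...,x_n, y_1,...,y_n of C_4^ℓ such that: x_i is adjacent to y_j if and only if i ≤ j; the x_i are pairwise adjacent; and the y_j are pairwise non-adjacent. In particular, C_4^ℓ contains an induced half-graph of order n. -/

import Mathlib

/-- The recursive blow-up of the 4-cycle of height `ℓ`: vertices are `[4]^ℓ`, and
distinct `σ, τ` are adjacent iff `σ i - τ i ≡ ±1 (mod 4)` where `i` is the first
position at which they differ. -/
def C4blow (ℓ : ℕ) : SimpleGraph (Fin ℓ → ZMod 4) where
  Adj σ τ := ∃ i : Fin ℓ, (∀ j, j < i → σ j = τ j) ∧ (σ i - τ i = 1 ∨ σ i - τ i = 3)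
  symm := by
    constructor
    rintro σ τ ⟨i, h, hd⟩
    refine ⟨i, fun j hj => (h j hj).symm, ?_⟩
    have hneg : τ i - σ i = -(σ i - τ i) := by ring
    rcases hd with h1 | h3
    · right; rw [hneg, h1]; decide
    · left; rw [hneg, h3]; decide
  loopless := by
    constructor
    rintro σ ⟨i, -, hd⟩
    rcases hd with h | h <;> rw [sub_self] at h <;> exact absurd h (by decide)
/-- for every `n ≥ 1` some `C4blow ℓ` contains an induced half-graph of
order `n` whose top part is a clique and whose bottom part is an independent set. -/
theorem C4blow_contains_halfgraph (n : ℕ) (hn : 1 ≤ n) :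
    ∃ (ℓ : ℕ) (x y : Fin n → (Fin ℓ → ZMod 4)),
      Function.Injective x ∧ Function.Injective y ∧ (∀ i j, x i ≠ y j) ∧
      (∀ i j, (C4blow ℓ).Adj (x i) (y j) ↔ i ≤ j) ∧
      (∀ i j, i ≠ j → (C4blow ℓ).Adj (x i) (x j)) ∧
      (∀ i j, ¬ (C4blow ℓ).Adj (y i) (y j)) := by
  refine ⟨n, fun i k => if (k:ℕ) < (i:ℕ) then 2 else 1,
          fun j k => if (k:ℕ) < (j:ℕ) then 2 else 0, ?_, ?_, ?_, ?_, ?_, ?_⟩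
  · intro i j h
    by_contra hne
    rcases lt_or_gt_of_ne (Fin.val_ne_of_ne hne) with hij | hij
    · have := congrFun h i
      simp only [if_neg (lt_irrefl _), if_pos hij] at this
      exact absurd this (by decide)
    · have := congrFun h j
      simp only [if_pos hij, if_neg (lt_irrefl _)] at this
      exact absurd this (by decide)
  · intro i j h
    by_contra hne
    rcases lt_or_gt_of_ne (Fin.val_ne_of_ne hne) with hij | hij
    · have := congrFun h i
      simp only [if_neg (lt_irrefl _), if_pos hij] at this
      exact absurd this (by decide)
    · have := congrFun h j
      simp only [if_pos hij, if_neg (lt_irrefl _)] at this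
      exact absurd this (by decide)
  · intro i j heq
    have := congrFun heq i
    simp only [if_neg (lt_irrefl _)] at this
    split_ifs at this <;> exact absurd this (by decide)
  · intro i j
    constructor
    · rintro ⟨m, hpre, hd⟩
      by_contra hij
      have hji : (j:ℕ) < (i:ℕ) := by
        have := Fin.lt_def.mp (lt_of_not_ge hij); exact this
      have hmj : (m:ℕ) ≤ (j:ℕ) := by
        by_contra hmj
        push_neg at hmj
        have := hpre j hmj
        simp only [if_pos hji, if_neg (lt_irrefl _)] at this
        exact absurd this (by decide)
      rcases lt_or_eq_of_le hmj with h | h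
      · have : ((2:ZMod 4) - 2 = 1 ∨ (2:ZMod 4) - 2 = 3) := by
          simpa [h, lt_of_le_of_lt hmj hji] using hd
        revert this; decide
      · have : ((2:ZMod 4) - 0 = 1 ∨ (2:ZMod 4) - 0 = 3) := by
          simpa [h, hji, lt_irrefl] using hd
        revert this; decide
    · intro hij
      have hij' : (i:ℕ) ≤ (j:ℕ) := hij
      refine ⟨i, fun k hk => ?_, ?_⟩
      · have hk' : (k:ℕ) < (i:ℕ) := hk
        simp only [if_pos hk', if_pos (lt_of_lt_of_le hk' hij')]
      · rcases lt_or_eq_of_le hij' with h | h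
        · right
          simp only [lt_irrefl, if_neg (lt_irrefl _), if_pos h]
          decide
        · left
          simp only [if_neg (lt_irrefl _), h, if_neg (lt_irrefl _)]
          decide
  · have key : ∀ i j : Fin n, (i:ℕ) < (j:ℕ) →
        (C4blow n).Adj (fun k => if (k:ℕ) < (i:ℕ) then 2 else 1)
          (fun k => if (k:ℕ) < (j:ℕ) then 2 else 1) := by
      intro i j hij
      refine ⟨i, fun k hk => ?_, ?_⟩
      · have hk' : (k:ℕ) < (i:ℕ) := hk
        simp only [if_pos hk', if_pos (lt_trans hk' hij)]
      · right
        simp only [if_neg (lt_irrefl _), if_pos hij]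
        decide
    intro i j hne
    rcases lt_or_gt_of_ne (Fin.val_ne_of_ne hne) with h | h
    · exact key i j h
    · exact (key j i h).symm
  · rintro i j ⟨m, -, hd⟩
    rcases hd with hd | hd <;> simp only [] at hd <;> split_ifs at hd <;>
      revert hd <;> decide
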